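/- Every Cauchy sequence of Bishop real numbers converges to some Bishop real number (Cauchy completeness of the Bishop reals). -/

import Mathlib

/-- A sequence of rationals indexed by positive naturals is *regular* if
`|x m - x n| ≤ 1/m + 1/n` for all `m n : ℕ+`. -/
def Regular (x : ℕ+ → ℚ) : Prop :=
  ∀ m n : ℕ+, |x m - x n| ≤ 1 / (m : ℚ) + 1 / (n : ℚ)

/-- Bishop equality of regular sequences. -/
def BishopEq (x y : ℕ+ → ℚ) : Prop :=
  ∀ n : ℕ+, |x n - y n| ≤ 2 / (n : ℚ)

/-- Strict order on Bishop reals. -/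
def BLt (x y : ℕ+ → ℚ) : Prop :=
  ∃ n : ℕ+, y n - x n > 1 / (n : ℚ)

/-- Non-strict order on Bishop reals. -/
def BLe (x y : ℕ+ → ℚ) : Prop :=
  ∀ n : ℕ+, y n - x n ≥ -(1 / (n : ℚ))

/-- Addition of Bishop reals: `(x + y) n = x (2n) + y (2n)`. -/
def bAdd (x y : ℕ+ → ℚ) : ℕ+ → ℚ := fun n => x (2 * n) + y (2 * n)

/-- Subtraction of Bishop reals. -/
def bSub (x y : ℕ+ → ℚ) : ℕ+ → ℚ := fun n => x (2 * n) - y (2 * n)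

/-- Componentwise negation. -/
def bNeg (x : ℕ+ → ℚ) : ℕ+ → ℚ := fun n => -(x n)

/-- Componentwise maximum. -/
def bMax (x y : ℕ+ → ℚ) : ℕ+ → ℚ := fun n => max (x n) (y n)

/-- Absolute value: `|x| = max {x, -x}`, componentwise `|x| n = |x n|`. -/
def bAbs (x : ℕ+ → ℚ) : ℕ+ → ℚ := fun n => |x n|

/-- Embedding of a rational as the constant regular sequence. -/
def bConst (q : ℚ) : ℕ+ → ℚ := fun _ => q

/-- A Bishop real number: a regular sequence of rationals. -/
structure BReal where
  seq : ℕ+ → ℚ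
  reg : Regular seq

/-- `|x - y| ≤ q` for Bishop reals `x y` and a rational bound `q`. -/
def bDistLe (x y : BReal) (q : ℚ) : Prop :=
  BLe (bAbs (bSub x.seq y.seq)) (bConst q)

/-- A sequence of Bishop reals is Cauchy. -/
def BCauchy (a : ℕ → BReal) : Prop :=
  ∀ k : ℕ+, ∃ N : ℕ, ∀ m n : ℕ, N ≤ m → N ≤ n → bDistLe (a m) (a n) (1 / (k : ℚ))

/-- A sequence of Bishop reals converges to the Bishop real `l`. -/
def BConvergesTo (a : ℕ → BReal) (l : BReal) : Prop :=
  ∀ k : ℕ+, ∃ N : ℕ, ∀ n : ℕ, N ≤ n → bDistLe (a n) l (1 / (k : ℚ))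


private lemma abs_triple (p q r s : ℚ) : |p - s| ≤ |p - q| + |q - r| + |r - s| := by
  calc |p - s| = |(p - q) + (q - r) + (r - s)| := by ring_nf
    _ ≤ |(p - q) + (q - r)| + |r - s| := abs_add_le _ _
    _ ≤ |p - q| + |q - r| + |r - s| := by
        have := abs_add_le (p - q) (q - r); linarith

theorem stmt8 (a : ℕ → BReal) (h : BCauchy a) :
    ∃ l : BReal, BConvergesTo a l := by
  classical
  -- unpack the Cauchy hypothesis into a pointwise bound
  have key : ∀ k : ℕ+, ∀ m n : ℕ, (h k).choose ≤ m → (h k).choose ≤ n →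
      ∀ j : ℕ+, |(a m).seq (2*j) - (a n).seq (2*j)| ≤ 1/(k:ℚ) + 1/(j:ℚ) := by
    intro k m n hm hn j
    have hj := (h k).choose_spec m n hm hn j
    simp only [bDistLe, BLe, bAbs, bSub, bConst] at hj
    linarith
  set Nf : ℕ+ → ℕ := fun k => (h (2*k)).choose with hNf
  set M : ℕ+ → ℕ := fun k => (Finset.Icc 1 (k:ℕ)).sup
      (fun i => if hi : 0 < i then Nf ⟨i, hi⟩ else 0) with hMdef
  have hM : ∀ j k : ℕ+, j ≤ k → Nf j ≤ M k := by
    intro j k hjk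
    have hmem : (j:ℕ) ∈ Finset.Icc 1 (k:ℕ) := by
      rw [Finset.mem_Icc]; exact ⟨j.one_le, by exact_mod_cast hjk⟩
    have hle := Finset.le_sup (f := fun i => if hi : 0 < i then Nf ⟨i, hi⟩ else 0) hmem
    simp only [dif_pos j.pos] at hle
    exact hle
  -- cast helpers
  have cast2 : ∀ m : ℕ+, ((2*m : ℕ+):ℚ) = 2*(m:ℚ) := by
    intro m; push_cast [PNat.mul_coe]; ring
  have cast4 : ∀ m : ℕ+, ((4*m : ℕ+):ℚ) = 4*(m:ℚ) := by
    intro m; push_cast [PNat.mul_coe]; ring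
  have castpos : ∀ m : ℕ+, (0:ℚ) < (m:ℚ) := fun m => by exact_mod_cast m.pos
  -- the main estimate
  have est : ∀ (n₁ n₂ : ℕ) (s i₁ i₂ m : ℕ+), Nf s ≤ n₁ → Nf s ≤ n₂ →
      |(a n₁).seq i₁ - (a n₂).seq i₂| ≤
        (1/(i₁:ℚ) + 1/(2*(m:ℚ))) + (1/(2*(s:ℚ)) + 1/(m:ℚ)) + (1/(2*(m:ℚ)) + 1/(i₂:ℚ)) := by
    intro n₁ n₂ s i₁ i₂ m hn₁ hn₂
    have t1 : |(a n₁).seq i₁ - (a n₁).seq (2*m)| ≤ 1/(i₁:ℚ) + 1/(2*(m:ℚ)) := by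
      have := (a n₁).reg i₁ (2*m); rwa [cast2] at this
    have t2 : |(a n₁).seq (2*m) - (a n₂).seq (2*m)| ≤ 1/(2*(s:ℚ)) + 1/(m:ℚ) := by
      have := key (2*s) n₁ n₂ hn₁ hn₂ m; rwa [cast2] at this
    have t3 : |(a n₂).seq (2*m) - (a n₂).seq i₂| ≤ 1/(2*(m:ℚ)) + 1/(i₂:ℚ) := by
      have := (a n₂).reg (2*m) i₂; rwa [cast2] at this
    have := abs_triple ((a n₁).seq i₁) ((a n₁).seq (2*m)) ((a n₂).seq (2*m)) ((a n₂).seq i₂)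
    linarith
  -- the limit sequence
  set y : ℕ+ → ℚ := fun k => (a (M k)).seq (2*k) with hy
  have hyreg' : ∀ j k : ℕ+, j ≤ k → |y j - y k| ≤ 1/(j:ℚ) + 1/(k:ℚ) := by
    intro j k hjk
    have hb := est (M j) (M k) j (2*j) (2*k) (4*k) (hM j j le_rfl) (hM j k hjk)
    simp only [cast2, cast4] at hb
    have hk := castpos k
    have hj := castpos j
    have hfin : (1/(2*(j:ℚ)) + 1/(2*(4*(k:ℚ)))) + (1/(2*(j:ℚ)) + 1/(4*(k:ℚ)))
        + (1/(2*(4*(k:ℚ))) + 1/(2*(k:ℚ))) = 1/(j:ℚ) + 1/(k:ℚ) := by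
      field_simp; ring
    linarith
  have hyreg : Regular y := by
    intro j k
    rcases le_total j k with hjk | hkj
    · exact hyreg' j k hjk
    · rw [abs_sub_comm]
      have := hyreg' k j hkj
      linarith
  refine ⟨⟨y, hyreg⟩, ?_⟩
  intro k
  refine ⟨M k, ?_⟩
  intro n hn p
  simp only [bDistLe, BLe, bAbs, bSub, bConst]
  -- need : 1/k - |(a n).seq (2p) - y (2p)| ≥ -(1/p)
  have hn' : Nf (k ⊓ 2*p) ≤ n := le_trans (hM _ k inf_le_left) hn
  have hM2p : Nf (k ⊓ 2*p) ≤ M (2*p) := hM _ _ inf_le_right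
  have hb := est n (M (2*p)) (k ⊓ 2*p) (2*p) (2*(2*p)) (4*k) hn' hM2p
  simp only [cast2, cast4] at hb
  have hk := castpos k
  have hp := castpos p
  have hsb : 1/(2*(((k ⊓ 2*p) : ℕ+):ℚ)) ≤ 1/(2*(k:ℚ)) + 1/(4*(p:ℚ)) := by
    rcases le_total k (2*p) with hc | hc
    · rw [inf_eq_left.mpr hc]
      have : (0:ℚ) < 1/(4*(p:ℚ)) := by positivity
      linarith
    · rw [inf_eq_right.mpr hc, cast2]
      have h1 : (0:ℚ) < 1/(2*(k:ℚ)) := by positivity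
      have h2 : 1/(2*(2*(p:ℚ))) = 1/(4*(p:ℚ)) := by ring_nf
      linarith
  have hy2p : y (2*p) = (a (M (2*p))).seq (2*(2*p)) := rfl
  rw [hy2p]
  have hfin : (1/(2*(p:ℚ)) + 1/(2*(4*(k:ℚ)))) + ((1/(2*(k:ℚ)) + 1/(4*(p:ℚ))) + 1/(4*(k:ℚ)))
      + (1/(2*(4*(k:ℚ))) + 1/(2*(2*(p:ℚ)))) = 1/(k:ℚ) + 1/(p:ℚ) := by
    field_simp; ring
  linarith
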